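/- Under the hypotheses of the abstract convergence setting — H a real inner product space, α > 0, sequences e₁, e₂, g₁₂, g₂₁ : ℕ → H and A₁, A₂, P : ℕ → ℝ with A₁(n), A₂(n), P(n) ≥ 0, A₁(n) = ⟨g₁₂(n) − α·e₁(n), e₁(n)⟩, A₂(n) + P(n) = ⟨g₂₁(n) − α·e₂(n), e₂(n)⟩, and updates g₁₂(n+1) = 2α·e₂(n) − g₂₁(n), g₂₁(n+1) = 2α·e₁(n) − g₁₂(n) — one has for every natural number M: ∑_{n=0}^{M} (A₁(n) + A₂(n) + P(n)) ≤ (1/(4α)) (‖g₁₂(0)‖² + ‖g₂₁(0)‖²). -/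

import Mathlib

open scoped RealInnerProductSpace

/-- Uniform partial-sum bound (4.7) in the proof of Theorem 3.2: the total dissipation
over all iterations is controlled by the initial transmission-data norm. -/
theorem iterative_method_partial_sum_bound {H : Type*} [NormedAddCommGroup H]
    [InnerProductSpace ℝ H] (α : ℝ) (hα : 0 < α)
    (e₁ e₂ g₁₂ g₂₁ : ℕ → H) (A₁ A₂ P : ℕ → ℝ)
    (hA₁ : ∀ n, A₁ n ≥ 0) (hA₂ : ∀ n, A₂ n ≥ 0) (hP : ∀ n, P n ≥ 0)
    (hid₁ : ∀ n, A₁ n = ⟪g₁₂ n - α • e₁ n, e₁ n⟫)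
    (hid₂ : ∀ n, A₂ n + P n = ⟪g₂₁ n - α • e₂ n, e₂ n⟫)
    (hupd₁ : ∀ n, g₁₂ (n + 1) = (2 * α) • e₂ n - g₂₁ n)
    (hupd₂ : ∀ n, g₂₁ (n + 1) = (2 * α) • e₁ n - g₁₂ n) :
    ∀ M : ℕ, ∑ n ∈ Finset.range (M + 1), (A₁ n + A₂ n + P n)
      ≤ (1 / (4 * α)) * (‖g₁₂ 0‖ ^ 2 + ‖g₂₁ 0‖ ^ 2) := by
  set S : ℕ → ℝ := fun n => ‖g₁₂ n‖ ^ 2 + ‖g₂₁ n‖ ^ 2 with hS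
  have step : ∀ n, S (n + 1) = S n - 4 * α * (A₁ n + A₂ n + P n) := by
    intro n
    have h1 : ‖g₂₁ (n + 1)‖ ^ 2 = ‖g₁₂ n‖ ^ 2 - 4 * α * A₁ n := by
      rw [hupd₂ n, @norm_sub_sq_real, hid₁ n]
      simp [inner_sub_left, inner_smul_left, real_inner_self_eq_norm_sq, norm_smul,
        abs_of_pos hα, real_inner_comm (e₁ n) (g₁₂ n)]
      ring
    have h2 : ‖g₁₂ (n + 1)‖ ^ 2 = ‖g₂₁ n‖ ^ 2 - 4 * α * (A₂ n + P n) := by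
      rw [hupd₁ n, @norm_sub_sq_real, hid₂ n]
      simp [inner_sub_left, inner_smul_left, real_inner_self_eq_norm_sq, norm_smul,
        abs_of_pos hα, real_inner_comm (e₂ n) (g₂₁ n)]
      ring
    simp only [hS, h1, h2]
    ring
  have key : ∀ M : ℕ, 4 * α * ∑ n ∈ Finset.range (M + 1), (A₁ n + A₂ n + P n)
      = S 0 - S (M + 1) := by
    intro M
    induction M with
    | zero => simp [step 0]
    | succ m ih =>
        rw [Finset.sum_range_succ, mul_add, ih, step (m + 1)]
        ring
  intro M
  have hSpos : 0 ≤ S (M + 1) := by positivity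
  have h4α : 0 < 4 * α := by linarith
  rw [div_mul_eq_mul_div, one_mul, le_div_iff₀ h4α]
  have hk := key M
  simp only [hS] at hk hSpos
  nlinarith
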